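/- Let (λ_i)_{i∈ℕ} be a summable sequence of nonnegative reals with at least one strictly positive term. Suppose 0 < N₁ < N₂ and β₁, β₂ > 0 satisfy Σ_{i=0}^∞ λ_i/(β₁ + N₁·λ_i) = 1 and Σ_{i=0}^∞ λ_i/(β₂ + N₂·λ_i) = 1. Then β₂ < β₁; i.e., the self-consistent parameter β of the NTK generalization formula is strictly decreasing in the number of training samples N. -/

import Mathlib

/-- Let `(λ_i)` be a summable sequence of nonnegative reals with at
least one strictly positive term. If `0 < N₁ < N₂` and `β₁, β₂ > 0` satisfy
`Σ_i λ_i/(β₁ + N₁·λ_i) = 1` and `Σ_i λ_i/(β₂ + N₂·λ_i) = 1`, then `β₂ < β₁`: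
the self-consistent parameter `β` is strictly decreasing in the sample size `N`. -/
theorem stmt_14 (lam : ℕ → ℝ) (hlam : ∀ i, 0 ≤ lam i) (hsum : Summable lam)
    (hpos : ∃ i, 0 < lam i)
    (N₁ N₂ : ℝ) (hN₁ : 0 < N₁) (hN : N₁ < N₂)
    (β₁ β₂ : ℝ) (hβ₁ : 0 < β₁) (hβ₂ : 0 < β₂)
    (hnorm₁ : ∑' i, lam i / (β₁ + N₁ * lam i) = 1)
    (hnorm₂ : ∑' i, lam i / (β₂ + N₂ * lam i) = 1) :
    β₂ < β₁ := by
  by_contra h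
  push_neg at h
  obtain ⟨i₀, hi₀⟩ := hpos
  have hden : ∀ i, 0 < β₁ + N₁ * lam i := fun i =>
    add_pos_of_pos_of_nonneg hβ₁ (mul_nonneg hN₁.le (hlam i))
  have hsum₁ : Summable (fun i => lam i / (β₁ + N₁ * lam i)) := by
    apply Summable.of_nonneg_of_le
      (fun i => div_nonneg (hlam i) (hden i).le)
      (fun i => ?_) (hsum.mul_left (1 / β₁))
    rw [one_div, inv_mul_eq_div]
    exact div_le_div_of_nonneg_left (hlam i) hβ₁ (le_add_of_nonneg_right
      (mul_nonneg hN₁.le (hlam i)))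
  have hden₂ : ∀ i, 0 < β₂ + N₂ * lam i := fun i =>
    add_pos_of_pos_of_nonneg hβ₂ (mul_nonneg (hN₁.trans hN).le (hlam i))
  have hle : ∀ i, lam i / (β₂ + N₂ * lam i) ≤ lam i / (β₁ + N₁ * lam i) := by
    intro i
    gcongr
    any_goals first
      | exact hlam i
      | exact hden i
  have hlt : lam i₀ / (β₂ + N₂ * lam i₀) < lam i₀ / (β₁ + N₁ * lam i₀) := by
    apply div_lt_div_of_pos_left hi₀ (hden i₀)
    exact add_lt_add_of_le_of_lt h (mul_lt_mul_of_pos_right hN hi₀)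
  have hsum₂ : Summable (fun i => lam i / (β₂ + N₂ * lam i)) :=
    Summable.of_nonneg_of_le (fun i => div_nonneg (hlam i) (hden₂ i).le) hle hsum₁
  have := Summable.tsum_lt_tsum hle hlt hsum₂ hsum₁
  rw [hnorm₁, hnorm₂] at this
  exact lt_irrefl 1 this
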